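/- (Strong symmetry for two-player games.) In any game G with exactly two players (N = 2), the two players have equal Shapley uncertainty: R_1(G) = R_2(G), even if their Shapley values differ. -/
import Mathlib
open Finset
noncomputable def shapleyWeight (N : ℕ) (S : Finset (Fin N)) : ℝ :=
  ((Nat.factorial S.card : ℝ) * (Nat.factorial (N - S.card - 1) : ℝ)) / (Nat.factorial N : ℝ)
noncomputable def marginal (N : ℕ) (G : Finset (Fin N) → ℝ) (i : Fin N)
    (S : Finset (Fin N)) : ℝ :=
  G (insert i S) - G S
noncomputable def shapleyValue (N : ℕ) (G : Finset (Fin N) → ℝ) (i : Fin N) : ℝ :=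
  ∑ S ∈ (Finset.univ.erase i).powerset, shapleyWeight N S * marginal N G i S
noncomputable def shapleyUncertainty (N : ℕ) (G : Finset (Fin N) → ℝ) (i : Fin N) : ℝ :=
  ∑ S ∈ (Finset.univ.erase i).powerset,
    shapleyWeight N S * (marginal N G i S - shapleyValue N G i) ^ 2
theorem shapley_uncertainty_strong_symmetry_two_players (G : Finset (Fin 2) → ℝ) :
    shapleyUncertainty 2 G 0 = shapleyUncertainty 2 G 1 := by
  have h0 : (Finset.univ.erase (0 : Fin 2)).powerset = {∅, {1}} := by decide
  have h1 : (Finset.univ.erase (1 : Fin 2)).powerset = {∅, {0}} := by decide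
  have e1 : insert (0:Fin 2) ({1} : Finset (Fin 2)) = insert 1 {0} := by decide
  have e2 : insert (0:Fin 2) (∅ : Finset (Fin 2)) = {0} := by decide
  have e3 : insert (1:Fin 2) (∅ : Finset (Fin 2)) = {1} := by decide
  rw [shapleyUncertainty, shapleyUncertainty, shapleyValue, shapleyValue, h0, h1,
    Finset.sum_pair (by decide : (∅:Finset (Fin 2)) ≠ {1}),
    Finset.sum_pair (by decide : (∅:Finset (Fin 2)) ≠ {0}),
    Finset.sum_pair (by decide : (∅:Finset (Fin 2)) ≠ {1}),
    Finset.sum_pair (by decide : (∅:Finset (Fin 2)) ≠ {0})]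
  simp [shapleyWeight, shapleyValue, shapleyWeight, marginal, h0, h1, e1, e2, e3,
    Finset.sum_insert, Finset.sum_singleton, Nat.factorial]
  ring
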